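/- arXiv:2112.06434 — 4 statements merged into one kernel-verified Lean document; each statement's English description precedes it below -/
import Mathlib

section
/- Let α, β, γ, δ be real numbers with γ > α > 0, 0 < β ≤ δ < 1, and 1 - 2β(γ - α) ≤ δ ≤ 1 + 2α(β - 1). If MSE(n) = C²·n^{-2βγ} + σ²·n^{-(1-δ+2αβ)} for constants C ≠ 0 and σ² > 0, then MSE(n) = O(n^{-2α}). -/
open Filter

/-- Proposition 4.2(i): under the exponent constraints, the MSE of the scalable
subagging estimator is O(n^{-2α}). -/
theorem mse_big_O (α β γ δ : ℝ) (C σ2 : ℝ) (MSE : ℕ → ℝ)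
    (hαpos : 0 < α) (hαγ : α < γ)
    (hβpos : 0 < β) (hβδ : β ≤ δ) (hδlt : δ < 1)
    (hδlb : 1 - 2 * β * (γ - α) ≤ δ) (hδub : δ ≤ 1 + 2 * α * (β - 1))
    (hC : C ≠ 0) (hσ : 0 < σ2)
    (hMSE : ∀ n : ℕ, MSE n =
      C ^ 2 * (n : ℝ) ^ (-(2 * β * γ)) + σ2 * (n : ℝ) ^ (-(1 - δ + 2 * α * β))) :
    ∃ K : ℝ, 0 < K ∧ ∀ᶠ n : ℕ in atTop, MSE n ≤ K * (n : ℝ) ^ (-(2 * α)) := by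
  refine ⟨C ^ 2 + σ2, by positivity, ?_⟩
  filter_upwards [eventually_ge_atTop 1] with n hn
  have hn1 : (1 : ℝ) ≤ (n : ℝ) := by exact_mod_cast hn
  have h1 : (n : ℝ) ^ (-(2 * β * γ)) ≤ (n : ℝ) ^ (-(2 * α)) :=
    Real.rpow_le_rpow_of_exponent_le hn1 (by linarith)
  have h2 : (n : ℝ) ^ (-(1 - δ + 2 * α * β)) ≤ (n : ℝ) ^ (-(2 * α)) :=
    Real.rpow_le_rpow_of_exponent_le hn1 (by linarith)
  have hC2 : (0:ℝ) ≤ C ^ 2 := sq_nonneg C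
  rw [hMSE n]
  nlinarith [mul_le_mul_of_nonneg_left h1 hC2, mul_le_mul_of_nonneg_left h2 hσ.le]
end

section
/- Let α, β, γ, δ be real numbers with γ > α > 0, 0 < β ≤ δ < 1, 1 - 2β(γ - α) ≤ δ, and δ < 1 + 2α(β - 1). If MSE(n) = C²·n^{-2βγ} + σ²·n^{-(1-δ+2αβ)} for constants C ≠ 0 and σ² > 0, then MSE(n) = o(n^{-2α}), i.e., n^{2α}·MSE(n) → 0 as n → ∞. -/
open Filter

lemma aux_tendsto (c e : ℝ) (he : 0 < e) :
    Tendsto (fun n : ℕ => c * (n : ℝ) ^ (-e)) atTop (nhds 0) := by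
  have h := (tendsto_rpow_neg_atTop he).comp tendsto_natCast_atTop_atTop (α := ℕ)
  simpa using h.const_mul c

/-- Proposition 4.2(ii): with δ strictly below the upper bound 1 + 2α(β-1),
the MSE of the scalable subagging estimator is o(n^{-2α}). -/
theorem mse_little_o (α β γ δ : ℝ) (C σ2 : ℝ) (MSE : ℕ → ℝ)
    (hαpos : 0 < α) (hαγ : α < γ)
    (hβpos : 0 < β) (hβδ : β ≤ δ) (hδlt : δ < 1)
    (hδlb : 1 - 2 * β * (γ - α) ≤ δ) (hδub : δ < 1 + 2 * α * (β - 1))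
    (hC : C ≠ 0) (hσ : 0 < σ2)
    (hMSE : ∀ n : ℕ, MSE n =
      C ^ 2 * (n : ℝ) ^ (-(2 * β * γ)) + σ2 * (n : ℝ) ^ (-(1 - δ + 2 * α * β))) :
    Tendsto (fun n : ℕ => (n : ℝ) ^ (2 * α) * MSE n) atTop (nhds 0) := by
  have he1 : 0 < 2 * β * γ - 2 * α := by nlinarith
  have he2 : 0 < (1 - δ + 2 * α * β) - 2 * α := by nlinarith
  have key : Tendsto (fun n : ℕ =>
      C ^ 2 * (n : ℝ) ^ (-(2 * β * γ - 2 * α)) +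
      σ2 * (n : ℝ) ^ (-((1 - δ + 2 * α * β) - 2 * α))) atTop (nhds 0) := by
    simpa using (aux_tendsto (C ^ 2) _ he1).add (aux_tendsto σ2 _ he2)
  refine key.congr' ?_
  filter_upwards [eventually_ge_atTop 1] with n hn
  have hnpos : (0 : ℝ) < (n : ℝ) := by exact_mod_cast hn
  have h1 : (n:ℝ)^(2*α) * (C^2 * (n:ℝ)^(-(2*β*γ))) = C^2 * (n:ℝ)^(-(2*β*γ-2*α)) := by
    rw [mul_comm, mul_assoc, ← Real.rpow_add hnpos]; ring_nf
  have h2 : (n:ℝ)^(2*α) * (σ2 * (n:ℝ)^(-(1-δ+2*α*β))) = σ2 * (n:ℝ)^(-((1-δ+2*α*β)-2*α)) := by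
    rw [mul_comm, mul_assoc, ← Real.rpow_add hnpos]; ring_nf
  rw [hMSE n, mul_add, h1, h2]
end

section
/- Assume E[θ̂_n] − θ ~ C·n^{-γ} and Var(θ̂_n) ~ σ²·n^{-2α} with γ > α > 0, C ≠ 0, σ² > 0. Let b(n) ~ c₂n^β with β = 1/(1+2(γ−α)), h = b, and θ̄ be the average of q = ⌊(n−b)/h⌋+1 i.i.d. copies of θ̂_b. Then [Bias(θ̄)]² = Θ(Var(θ̄)), i.e., the ratio [Bias(θ̄)]²/Var(θ̄) converges to a positive finite constant as n → ∞. -/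
open Filter Real

lemma key_alg (x nR Q bias v C σ2 γ α s : ℝ) (hx : 0 < x) (hn : 0 < nR)
    (hv : v ≠ 0) (hC : C ≠ 0) (hσ : σ2 ≠ 0) (hsdef : s = 1 + 2 * (γ - α)) :
    bias ^ 2 / (v / Q) =
      (bias / (C * x ^ (-γ))) ^ 2 * ((σ2 * x ^ (-(2 * α))) / v) * (C ^ 2 / σ2) *
        (Q * x / nR) * (nR * x ^ (-s)) := by
  have hx0 : x ≠ 0 := hx.ne'
  have h1 : x ^ (-γ) ≠ 0 := (Real.rpow_pos_of_pos hx _).ne'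
  have h2 : x ^ (-(2*α)) ≠ 0 := (Real.rpow_pos_of_pos hx _).ne'
  have h3 : x ^ (-s) ≠ 0 := (Real.rpow_pos_of_pos hx _).ne'
  have e2 : (x ^ (-γ)) ^ 2 = x ^ (-(2*γ)) := by
    rw [← Real.rpow_natCast (x ^ (-γ)) 2, ← Real.rpow_mul hx.le]
    ring_nf
  have ecomb : x ^ (-(2*α)) * x ^ (-s) * x = x ^ (-(2*γ)) := by
    rw [← Real.rpow_add hx, ← Real.rpow_add_one hx0]
    congr 1
    rw [hsdef]; ring
  field_simp
  rw [e2, ← ecomb]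
  ring

/-- Corollary 4.1(ii): with Bias(θ̂_m) ~ C m^{-γ}, Var(θ̂_m) ~ σ² m^{-2α},
b(n) ~ c₂ n^β at the optimal β = 1/(1+2(γ-α)), h = b, and the subagging
estimator θ̄ being the average of q = ⌊(n-b)/h⌋+1 i.i.d. copies of θ̂_b so that
Bias(θ̄)(n) = bias(b n) and Var(θ̄)(n) = v(b n)/q(n), the squared bias and the
variance are of exactly the same order: their ratio tends to a positive
finite constant. -/
theorem bias_sq_theta_of_var (α γ c₂ C σ2 : ℝ) (bias v : ℕ → ℝ) (b : ℕ → ℕ)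
    (hαpos : 0 < α) (hαγ : α < γ) (hC : C ≠ 0) (hσ : 0 < σ2) (hc₂ : 0 < c₂)
    (hbias : Tendsto (fun m : ℕ => bias m / (C * (m : ℝ) ^ (-γ))) atTop (nhds 1))
    (hvar : Tendsto (fun m : ℕ => v m / (σ2 * (m : ℝ) ^ (-(2 * α)))) atTop (nhds 1))
    (hb : Tendsto (fun n : ℕ =>
      (b n : ℝ) / (c₂ * (n : ℝ) ^ (1 / (1 + 2 * (γ - α))))) atTop (nhds 1)) :
    ∃ K : ℝ, 0 < K ∧
      Tendsto (fun n : ℕ =>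
          (bias (b n)) ^ 2 / (v (b n) / ((n - b n) / b n + 1 : ℕ)))
        atTop (nhds K) := by
  set s : ℝ := 1 + 2 * (γ - α) with hsdef
  have hs1 : 1 < s := by simp only [hsdef]; linarith
  have hs0 : 0 < s := lt_trans one_pos hs1
  set β : ℝ := 1 / s with hβdef
  have hβ0 : 0 < β := by positivity
  have hβ1 : β < 1 := by rw [hβdef, div_lt_one hs0]; exact hs1
  have hg : Tendsto (fun n : ℕ => c₂ * (n : ℝ) ^ β) atTop atTop :=
    ((tendsto_rpow_atTop hβ0).comp tendsto_natCast_atTop_atTop).const_mul_atTop hc₂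
  have hbR : Tendsto (fun n : ℕ => (b n : ℝ)) atTop atTop := by
    have h := hb.pos_mul_atTop one_pos hg
    refine h.congr' ?_
    filter_upwards [hg.eventually_gt_atTop 0] with n hn
    exact div_mul_cancel₀ _ hn.ne'
  have hbN : Tendsto b atTop atTop := by
    exact_mod_cast tendsto_natCast_atTop_iff.mp hbR
  have hbn0 : Tendsto (fun n : ℕ => (b n : ℝ) / n) atTop (nhds 0) := by
    have h2 : Tendsto (fun n : ℕ => c₂ * (n : ℝ) ^ (β - 1)) atTop (nhds 0) := by
      have h := (tendsto_rpow_neg_atTop (by linarith : (0:ℝ) < 1 - β)).comp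
        tendsto_natCast_atTop_atTop
      have h3 := h.const_mul c₂
      simpa [neg_sub] using h3
    have h4 := hb.mul h2
    rw [one_mul] at h4
    refine h4.congr' ?_
    filter_upwards [eventually_gt_atTop 0] with n hn
    have hnR : (0:ℝ) < n := by exact_mod_cast hn
    have e : (n:ℝ) ^ (β - 1) = (n:ℝ) ^ β / n := by
      rw [Real.rpow_sub hnR, Real.rpow_one]
    rw [e]
    field_simp
  have hble : ∀ᶠ n : ℕ in atTop, b n ≤ n ∧ 1 ≤ b n ∧ 1 ≤ n := by
    filter_upwards [hbn0.eventually (gt_mem_nhds one_pos), hbN.eventually_ge_atTop 1,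
      eventually_ge_atTop 1] with n h1 h2 h3
    refine ⟨?_, h2, h3⟩
    by_contra hcon
    push_neg at hcon
    have hnR : (0:ℝ) < n := by exact_mod_cast h3
    have : (1:ℝ) ≤ (b n : ℝ) / n := by
      rw [le_div_iff₀ hnR, one_mul]
      exact_mod_cast hcon.le
    linarith
  -- q * b / n → 1
  have hq : Tendsto (fun n : ℕ =>
      (((n - b n) / b n + 1 : ℕ) : ℝ) * (b n) / n) atTop (nhds 1) := by
    have hlow : Tendsto (fun n : ℕ => 1 - (b n : ℝ) / n) atTop (nhds 1) := by
      simpa using (tendsto_const_nhds (x := (1:ℝ))).sub hbn0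
    refine tendsto_of_tendsto_of_tendsto_of_le_of_le' hlow tendsto_const_nhds ?_ ?_
    · filter_upwards [hble] with n ⟨h1, h2, h3⟩
      have hnR : (0:ℝ) < n := by exact_mod_cast h3
      have hnb : n - b n ≤ ((n - b n) / b n + 1) * b n := by
        have hmod := Nat.div_add_mod (n - b n) (b n)
        have hlt : (n - b n) % b n < b n := Nat.mod_lt _ (by omega)
        calc n - b n = b n * ((n - b n) / b n) + (n - b n) % b n :=
              (Nat.div_add_mod _ _).symm
          _ ≤ b n * ((n - b n) / b n) + b n := by omega
          _ = ((n - b n) / b n + 1) * b n := by ring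
      have hcast : ((n:ℝ) - b n) ≤ (((n - b n) / b n + 1 : ℕ) : ℝ) * b n := by
        have := (Nat.cast_le (α := ℝ)).mpr hnb
        rw [Nat.cast_sub h1] at this
        push_cast at this ⊢
        linarith
      have e : 1 - (b n:ℝ)/n = ((n:ℝ) - b n)/n := by field_simp
      rw [e]
      gcongr
    · filter_upwards [hble] with n ⟨h1, h2, h3⟩
      have hnR : (0:ℝ) < n := by exact_mod_cast h3
      rw [div_le_one hnR]
      have hnb : ((n - b n) / b n + 1) * b n ≤ n := by
        have hdiv := Nat.div_mul_le_self (n - b n) (b n)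
        calc ((n - b n) / b n + 1) * b n = (n - b n) / b n * b n + b n := by ring
          _ ≤ (n - b n) + b n := by omega
          _ = n := by omega
      exact_mod_cast hnb
  -- n * (b n)^(-s) → c₂ ^ (-s)
  have hns : Tendsto (fun n : ℕ => (n : ℝ) * (b n : ℝ) ^ (-s)) atTop
      (nhds (c₂ ^ (-s))) := by
    have hc : Tendsto (fun n : ℕ => (b n : ℝ) / (n : ℝ) ^ β) atTop (nhds c₂) := by
      have h := hb.mul_const c₂
      rw [one_mul] at h
      refine h.congr' ?_
      filter_upwards [eventually_gt_atTop 0] with n hn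
      have hnR : (0:ℝ) < (n:ℝ) ^ β := Real.rpow_pos_of_pos (by exact_mod_cast hn) β
      field_simp
    have hcont : ContinuousAt (fun x : ℝ => x ^ (-s)) c₂ :=
      Real.continuousAt_rpow_const c₂ (-s) (Or.inl hc₂.ne')
    refine (hcont.tendsto.comp hc).congr' ?_
    filter_upwards [hble] with n ⟨h1, h2, h3⟩
    have hnR : (0:ℝ) < n := by exact_mod_cast h3
    have hbpos : (0:ℝ) < (b n : ℝ) := by exact_mod_cast h2
    have hnβ : (0:ℝ) < (n:ℝ) ^ β := Real.rpow_pos_of_pos hnR β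
    show ((b n : ℝ) / (n:ℝ) ^ β) ^ (-s) = (n : ℝ) * (b n : ℝ) ^ (-s)
    rw [Real.div_rpow hbpos.le hnβ.le, ← Real.rpow_mul hnR.le]
    have e : β * (-s) = -1 := by rw [hβdef]; field_simp
    rw [e, Real.rpow_neg_one]
    field_simp
  -- v (b n) eventually positive
  have hvpos : ∀ᶠ n : ℕ in atTop, 0 < v (b n) := by
    have h := (hvar.comp hbN).eventually (eventually_gt_nhds (by norm_num : (0:ℝ) < 1))
    filter_upwards [h, hbN.eventually_ge_atTop 1] with n hn hb1
    have hbpos : (0:ℝ) < (b n : ℝ) := by exact_mod_cast hb1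
    have hd : (0:ℝ) < σ2 * (b n : ℝ) ^ (-(2*α)) :=
      mul_pos hσ (Real.rpow_pos_of_pos hbpos _)
    have := mul_pos hn hd
    simpa [div_mul_cancel₀ _ hd.ne'] using this
  -- assemble
  have hA : Tendsto (fun n : ℕ => bias (b n) / (C * ((b n : ℕ) : ℝ) ^ (-γ))) atTop
      (nhds 1) := hbias.comp hbN
  have hBinv : Tendsto (fun n : ℕ =>
      (σ2 * ((b n : ℕ) : ℝ) ^ (-(2*α))) / v (b n)) atTop (nhds 1) := by
    simpa [inv_div] using ((hvar.comp hbN).inv₀ one_ne_zero)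
  have hT := ((((hA.pow 2).mul hBinv).mul
      (tendsto_const_nhds (x := C ^ 2 / σ2))).mul hq).mul hns
  refine ⟨C ^ 2 / σ2 * c₂ ^ (-s), ?_, ?_⟩
  · exact mul_pos (div_pos (pow_two_pos_of_ne_zero hC) hσ) (Real.rpow_pos_of_pos hc₂ _)
  · have heq : (fun n : ℕ =>
        (bias (b n) / (C * ((b n : ℕ) : ℝ) ^ (-γ))) ^ 2 *
          ((σ2 * ((b n : ℕ) : ℝ) ^ (-(2 * α))) / v (b n)) * (C ^ 2 / σ2) *
          ((((n - b n) / b n + 1 : ℕ) : ℝ) * (b n) / n) *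
          ((n : ℝ) * ((b n : ℕ) : ℝ) ^ (-s))) =ᶠ[atTop]
        (fun n : ℕ => (bias (b n)) ^ 2 / (v (b n) / ((n - b n) / b n + 1 : ℕ))) := by
      filter_upwards [hble, hvpos] with n hn hv0
      obtain ⟨h1, h2, h3⟩ := hn
      exact (key_alg ((b n : ℕ) : ℝ) (n : ℝ) _ _ _ _ _ _ _ _
        (by exact_mod_cast h2) (by exact_mod_cast h3) hv0.ne' hC hσ.ne' hsdef).symm
    have hfin := hT.congr' heq
    convert hfin using 2
    ring
end

section
/- Assume E[θ̂_n] − θ ~ C·n^{-γ} and Var(θ̂_n) ~ σ²·n^{-2α} with γ > α > 0, C ≠ 0, σ² > 0. Let b(n) ~ c₂n^β and h(n) ~ c₃n^δ with β = δ and 1/(1+2(γ−α)) < β < 1/(2(γ−α)), h ≥ b, and θ̄ the average of q = ⌊(n−b)/h⌋+1 i.i.d. copies of θ̂_b. Then [Bias(θ̄)]² = o(Var(θ̄)), i.e., [Bias(θ̄)]²/Var(θ̄) → 0 as n → ∞. -/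
open Filter

set_option maxHeartbeats 1000000 in
/-- Corollary 4.1(i): with Bias(θ̂_m) ~ C m^{-γ}, Var(θ̂_m) ~ σ² m^{-2α},
b(n) ~ c₂ n^β and h(n) ~ c₃ n^δ with δ = β, 1/(1+2(γ-α)) < β < 1/(2(γ-α)),
and h ≥ b, the subagging estimator θ̄ (average of q = ⌊(n-b)/h⌋+1 i.i.d.
copies of θ̂_b) has [Bias(θ̄)]² = o(Var(θ̄)). -/
theorem bias_sq_little_o_var (α γ β c₂ c₃ C σ2 : ℝ) (bias v : ℕ → ℝ) (b h : ℕ → ℕ)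
    (hαpos : 0 < α) (hαγ : α < γ) (hC : C ≠ 0) (hσ : 0 < σ2)
    (hc₂ : 0 < c₂) (hc₃ : 0 < c₃)
    (hβlb : 1 / (1 + 2 * (γ - α)) < β) (hβub : β < 1 / (2 * (γ - α)))
    (hbias : Tendsto (fun m : ℕ => bias m / (C * (m : ℝ) ^ (-γ))) atTop (nhds 1))
    (hvar : Tendsto (fun m : ℕ => v m / (σ2 * (m : ℝ) ^ (-(2 * α)))) atTop (nhds 1))
    (hb : Tendsto (fun n : ℕ => (b n : ℝ) / (c₂ * (n : ℝ) ^ β)) atTop (nhds 1))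
    (hh : Tendsto (fun n : ℕ => (h n : ℝ) / (c₃ * (n : ℝ) ^ β)) atTop (nhds 1))
    (hhb : ∀ n, b n ≤ h n) :
    Tendsto (fun n : ℕ =>
        (bias (b n)) ^ 2 / (v (b n) / ((n - b n) / h n + 1 : ℕ)))
      atTop (nhds 0) := by
  have hγα : 0 < γ - α := sub_pos.mpr hαγ
  have hβpos : 0 < β := lt_trans (by positivity) hβlb
  have hC2 : 0 < C ^ 2 := lt_of_le_of_ne (sq_nonneg C) (Ne.symm (pow_ne_zero 2 hC))
  set r : ℝ := 2 * β * (γ - α) with hrdef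
  have hrpos : 0 < r := by positivity
  have hlb' : 1 - β < r := by
    have h1 : 0 < 1 + 2 * (γ - α) := by linarith
    have h2 := (div_lt_iff₀ h1).mp hβlb
    nlinarith
  -- b n → ∞
  have hgrow : Tendsto (fun n : ℕ => c₂ * (n : ℝ) ^ β) atTop atTop :=
    Tendsto.const_mul_atTop hc₂
      ((tendsto_rpow_atTop hβpos).comp tendsto_natCast_atTop_atTop)
  have hbR : Tendsto (fun n : ℕ => (b n : ℝ)) atTop atTop := by
    have hmul := Tendsto.pos_mul_atTop one_pos hb hgrow
    refine hmul.congr' ?_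
    filter_upwards [eventually_ge_atTop 1] with n hn
    have hn0 : (0:ℝ) < (n:ℝ) := by exact_mod_cast hn
    have : c₂ * (n:ℝ) ^ β ≠ 0 := by positivity
    field_simp
  have hbN : Tendsto b atTop atTop := tendsto_natCast_atTop_iff.mp hbR
  -- constants
  set K₂ : ℝ := 8 * C ^ 2 / σ2 * (c₂ / 2) ^ (-(2 * (γ - α))) with hK₂
  set K₁ : ℝ := K₂ * (2 / c₃) with hK₁
  have hK₂pos : 0 < K₂ := by
    have : (0:ℝ) < (c₂ / 2) ^ (-(2 * (γ - α))) := Real.rpow_pos_of_pos (by positivity) _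
    positivity
  -- the dominating sequence
  set F : ℕ → ℝ := fun n => K₁ * (n : ℝ) ^ (1 - β - r) + K₂ * (n : ℝ) ^ (-r) with hF
  have hFlim : Tendsto F atTop (nhds 0) := by
    have t1 : Tendsto (fun n : ℕ => (n : ℝ) ^ (1 - β - r)) atTop (nhds 0) := by
      have e : -(β + r - 1) = 1 - β - r := by ring
      have := (tendsto_rpow_neg_atTop (show 0 < β + r - 1 by linarith)).comp
        (tendsto_natCast_atTop_atTop (R := ℝ))
      simpa [Function.comp_def, e] using this
    have t2 : Tendsto (fun n : ℕ => (n : ℝ) ^ (-r)) atTop (nhds 0) :=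
      (tendsto_rpow_neg_atTop hrpos).comp (tendsto_natCast_atTop_atTop (R := ℝ))
    have := ((t1.const_mul K₁).add (t2.const_mul K₂))
    simpa using this
  -- eventual bounds
  have memIoo : Set.Ioo (1/2 : ℝ) 2 ∈ nhds (1:ℝ) :=
    Ioo_mem_nhds (by norm_num) (by norm_num)
  have Ebias := hbN.eventually (hbias.eventually memIoo)
  have Ev := hbN.eventually (hvar.eventually memIoo)
  have Eb := hb.eventually memIoo
  have Eh := hh.eventually memIoo
  have Ebge := hbN.eventually (eventually_ge_atTop 1)
  refine tendsto_of_tendsto_of_tendsto_of_le_of_le' tendsto_const_nhds hFlim ?_ ?_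
  · -- nonnegativity
    filter_upwards [Ev, Ebge] with n hv1 hm1
    have hm0 : (0:ℝ) < (b n : ℝ) := by exact_mod_cast hm1
    have hden : (0:ℝ) < σ2 * (b n : ℝ) ^ (-(2 * α)) := by positivity
    have hvpos : 0 < v (b n) := by
      have := (lt_div_iff₀ hden).mp hv1.1
      nlinarith
    have hq : (0:ℝ) < (((n - b n) / h n + 1 : ℕ) : ℝ) := by positivity
    positivity
  · -- the main upper bound
    filter_upwards [Ebias, Ev, Eb, Eh, Ebge, eventually_ge_atTop 1]
      with n h2 h3 h4 h5 hm1 hn1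
    have hn0 : (0:ℝ) < (n:ℝ) := by exact_mod_cast hn1
    have hm0 : (0:ℝ) < (b n : ℝ) := by exact_mod_cast hm1
    set mR : ℝ := (b n : ℝ) with hmR
    set nR : ℝ := (n : ℝ) with hnR
    have hnβ : (0:ℝ) < nR ^ β := Real.rpow_pos_of_pos hn0 _
    -- b n lower bound
    have hbl : c₂ * nR ^ β / 2 < mR := by
      have hD : (0:ℝ) < c₂ * nR ^ β := by positivity
      have := (lt_div_iff₀ hD).mp h4.1
      linarith
    -- h n lower bound
    have hhl : c₃ * nR ^ β / 2 < (h n : ℝ) := by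
      have hD : (0:ℝ) < c₃ * nR ^ β := by positivity
      have := (lt_div_iff₀ hD).mp h5.1
      linarith
    have hhpos : (0:ℝ) < (h n : ℝ) := lt_trans (by positivity) hhl
    -- bias bound
    have hxm : mR ^ (-γ) * mR ^ (-γ) = mR ^ (-(2*γ)) := by
      rw [← Real.rpow_add hm0]; congr 1; ring
    have hD2 : C * mR ^ (-γ) ≠ 0 :=
      mul_ne_zero hC (Real.rpow_pos_of_pos hm0 _).ne'
    set ρ : ℝ := bias (b n) / (C * mR ^ (-γ)) with hρdef
    have hbe : bias (b n) = ρ * (C * mR ^ (-γ)) := (div_mul_cancel₀ _ hD2).symm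
    have hbias2 : bias (b n) ^ 2 ≤ 4 * C ^ 2 * mR ^ (-(2*γ)) := by
      have hρ : ρ ^ 2 ≤ 4 := by nlinarith [h2.1, h2.2]
      have hb2 : bias (b n) ^ 2 = ρ ^ 2 * C ^ 2 * (mR ^ (-γ) * mR ^ (-γ)) := by
        rw [hbe]; ring
      rw [hb2, hxm]
      calc ρ ^ 2 * C ^ 2 * mR ^ (-(2*γ)) = ρ ^ 2 * (C ^ 2 * mR ^ (-(2*γ))) := by ring
        _ ≤ 4 * (C ^ 2 * mR ^ (-(2*γ))) :=
            mul_le_mul_of_nonneg_right hρ (by positivity)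
        _ = 4 * C ^ 2 * mR ^ (-(2*γ)) := by ring
    -- variance lower bound
    have hvp : (0:ℝ) < σ2 * mR ^ (-(2 * α)) := by
      have := Real.rpow_pos_of_pos hm0 (-(2*α)); positivity
    have hvlow : σ2 / 2 * mR ^ (-(2 * α)) ≤ v (b n) := by
      have := (lt_div_iff₀ hvp).mp h3.1
      nlinarith
    have hvpos : 0 < v (b n) := lt_of_lt_of_le (by positivity) hvlow
    -- q bound
    set q : ℕ := (n - b n) / h n + 1 with hqdef
    have hqR : (q : ℝ) ≤ 2 / c₃ * nR ^ (1 - β) + 1 := by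
      have s1 : ((n - b n) / h n : ℕ) ≤ (n / h n : ℕ) :=
        Nat.div_le_div_right (Nat.sub_le n (b n))
      have s2 : ((n / h n : ℕ) : ℝ) ≤ nR / (h n : ℝ) := Nat.cast_div_le
      have s3 : nR / (h n : ℝ) ≤ nR / (c₃ * nR ^ β / 2) :=
        div_le_div_of_nonneg_left hn0.le (by positivity) hhl.le
      have s4 : nR / (c₃ * nR ^ β / 2) = 2 / c₃ * nR ^ (1 - β) := by
        rw [Real.rpow_sub hn0, Real.rpow_one]
        field_simp
      have : ((n - b n) / h n : ℕ) ≤ (2 / c₃ * nR ^ (1 - β) : ℝ) := by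
        calc (((n - b n) / h n : ℕ) : ℝ) ≤ ((n / h n : ℕ) : ℝ) := by exact_mod_cast s1
          _ ≤ nR / (h n : ℝ) := s2
          _ ≤ nR / (c₃ * nR ^ β / 2) := s3
          _ = 2 / c₃ * nR ^ (1 - β) := s4
      rw [hqdef]
      push_cast
      linarith
    have hqpos : (0:ℝ) < (q : ℝ) := by positivity
    -- combine
    have key : bias (b n) ^ 2 / (v (b n) / (q : ℝ))
        ≤ (4 * C ^ 2 * mR ^ (-(2*γ)) * (2 / c₃ * nR ^ (1 - β) + 1))
            / (σ2 / 2 * mR ^ (-(2 * α))) := by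
      rw [div_div_eq_mul_div]
      refine div_le_div₀ (by positivity) ?_ (by positivity) hvlow
      exact mul_le_mul hbias2 hqR hqpos.le (by positivity)
    refine le_trans key ?_
    -- simplify the middle expression
    have hmid : (4 * C ^ 2 * mR ^ (-(2*γ)) * (2 / c₃ * nR ^ (1 - β) + 1))
            / (σ2 / 2 * mR ^ (-(2 * α)))
        = 8 * C ^ 2 / σ2 * mR ^ (-(2 * (γ - α))) * (2 / c₃ * nR ^ (1 - β) + 1) := by
      have hsub : mR ^ (-(2 * (γ - α))) = mR ^ (-(2*γ)) / mR ^ (-(2 * α)) := by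
        rw [← Real.rpow_sub hm0]; ring_nf
      have hmne : mR ^ (-(2 * α)) ≠ 0 := (Real.rpow_pos_of_pos hm0 _).ne'
      rw [hsub]
      field_simp
      ring
    rw [hmid]
    -- bound m^{-2(γ-α)} by the n-power
    have hbase : mR ^ (-(2 * (γ - α))) ≤ (c₂ / 2) ^ (-(2 * (γ - α))) * nR ^ (-r) := by
      have e1 : (c₂ * nR ^ β / 2) ^ (-(2 * (γ - α)))
          = (c₂ / 2) ^ (-(2 * (γ - α))) * nR ^ (-r) := by
        have : c₂ * nR ^ β / 2 = (c₂ / 2) * nR ^ β := by ring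
        rw [this, Real.mul_rpow (by positivity) hnβ.le, ← Real.rpow_mul hn0.le]
        congr 1
        rw [hrdef]; ring
      rw [← e1]
      exact Real.rpow_le_rpow_of_nonpos (by positivity) hbl.le (by nlinarith)
    have hX : (0:ℝ) ≤ 2 / c₃ * nR ^ (1 - β) + 1 := by positivity
    have step : 8 * C ^ 2 / σ2 * mR ^ (-(2 * (γ - α))) * (2 / c₃ * nR ^ (1 - β) + 1)
        ≤ K₂ * nR ^ (-r) * (2 / c₃ * nR ^ (1 - β) + 1) := by
      rw [hK₂]
      have h8 : (0:ℝ) ≤ 8 * C ^ 2 / σ2 := by positivity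
      calc 8 * C ^ 2 / σ2 * mR ^ (-(2 * (γ - α))) * (2 / c₃ * nR ^ (1 - β) + 1)
          ≤ 8 * C ^ 2 / σ2 * ((c₂ / 2) ^ (-(2 * (γ - α))) * nR ^ (-r))
              * (2 / c₃ * nR ^ (1 - β) + 1) := by
            refine mul_le_mul_of_nonneg_right (mul_le_mul_of_nonneg_left hbase h8) hX
        _ = 8 * C ^ 2 / σ2 * (c₂ / 2) ^ (-(2 * (γ - α))) * nR ^ (-r)
              * (2 / c₃ * nR ^ (1 - β) + 1) := by ring
    refine le_trans step ?_
    -- finally equal to F n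
    have hpow : nR ^ (-r) * nR ^ (1 - β) = nR ^ (1 - β - r) := by
      rw [← Real.rpow_add hn0]; congr 1; ring
    have : K₂ * nR ^ (-r) * (2 / c₃ * nR ^ (1 - β) + 1)
        = K₁ * nR ^ (1 - β - r) + K₂ * nR ^ (-r) := by
      rw [hK₁, ← hpow]; ring
    rw [this]
end
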